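/- Let n be even, z ∈ W⁺_n a fixed-point-free involution (no i ∈ [n] with z(i) = i), and w a minimal-length element of W⁺_n with w ∘ y ∘ w⁻¹ = z for y = t₁t₃t₅⋯t_{n−1}. If i ∈ [n−3] is odd and w_{i+1} > w_{i+3}, then the consecutive one-line values satisfy w_i w_{i+1} w_{i+2} w_{i+3} = A,D,B,C for some integers A < B < C < D. -/

import Mathlib

/-- The simple generators of the even-signed permutation group `W⁺_n`:
`tD 0 = t₋₁ = (−2,1)(−1,2)` and `tD i = t_i = (i,i+1)(−i−1,−i)` for `i ≥ 1`. -/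
def tD (i : ℕ) : Equiv.Perm ℤ :=
  if i = 0 then Equiv.swap (-2) 1 * Equiv.swap (-1) 2
  else Equiv.swap (i : ℤ) ((i : ℤ) + 1) * Equiv.swap (-(i : ℤ) - 1) (-(i : ℤ))

/-- The group `W⁺_n`: signed permutations of `[±n]` with an even number of
sign changes on `{1, …, n}`. -/
def Dgrp (n : ℕ) : Set (Equiv.Perm ℤ) :=
  {w | (∀ i : ℤ, w (-i) = -(w i)) ∧ (∀ i : ℤ, (n : ℤ) < |i| → w i = i) ∧
    Even (((Finset.Icc (1 : ℤ) (n : ℤ)).filter (fun i => w i < 0)).card)}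

/-- Coxeter length on `W⁺_n`. -/
noncomputable def lenD (n : ℕ) (w : Equiv.Perm ℤ) : ℕ :=
  sInf {m | ∃ l : List ℕ, (∀ i ∈ l, i < n) ∧ (l.map tD).prod = w ∧ l.length = m}

/-- The element `y = t₁ t₃ t₅ ⋯ t_{n−1}` of `W⁺_n` (for `n` even). -/
def yfpf (n : ℕ) : Equiv.Perm ℤ :=
  (((List.range n).filter (fun i => i % 2 == 1)).map tD).prod

namespace S19
open Equiv Finset

open Equiv Finset

def tf (k : ℕ) (x : ℤ) : ℤ :=
  if k = 0 then (if x = -2 then 1 else if x = 1 then -2 else if x = -1 then 2 else if x = 2 then -1 else x)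
  else (if x = k then (k:ℤ)+1 else if x = (k:ℤ)+1 then k else if x = -(k:ℤ)-1 then -k else if x = -k then -(k:ℤ)-1 else x)

lemma cast_cases (k : ℕ) : k = 0 ∨ 1 ≤ (k:ℤ) := by
  rcases Nat.eq_zero_or_pos k with h|h
  · exact Or.inl h
  · exact Or.inr (by exact_mod_cast h)

lemma tD_apply (k : ℕ) (x : ℤ) : tD k x = tf k x := by
  rcases eq_or_ne k 0 with rfl|h
  · rw [show tD 0 = Equiv.swap (-2) 1 * Equiv.swap (-1) 2 from if_pos rfl]
    unfold tf
    rw [if_pos rfl]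
    simp only [Equiv.Perm.mul_apply, Equiv.swap_apply_def]
    split_ifs
    all_goals first | omega | exact absurd rfl (by assumption) | exact False.elim (by assumption)
  · have hk : 1 ≤ (k:ℤ) := by
      have := Nat.one_le_iff_ne_zero.mpr h; exact_mod_cast this
    rw [show tD k = Equiv.swap (k:ℤ) ((k:ℤ)+1) * Equiv.swap (-(k:ℤ)-1) (-(k:ℤ)) from if_neg h]
    unfold tf
    rw [if_neg h]
    simp only [Equiv.Perm.mul_apply, Equiv.swap_apply_def]
    split_ifs
    all_goals first | omega | exact absurd rfl (by assumption) | exact False.elim (by assumption)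

set_option maxHeartbeats 1000000 in
lemma tf_tf (k : ℕ) (x : ℤ) : tf k (tf k x) = x := by
  unfold tf
  split_ifs
  all_goals first | omega | exact absurd rfl (by assumption) | exact False.elim (by assumption)

lemma tD_antisym (k : ℕ) (x : ℤ) : tD k (-x) = -(tD k x) := by
  rw [tD_apply, tD_apply]
  rcases cast_cases k with h|h <;> unfold tf <;> split_ifs <;>
    first | omega | exact absurd rfl (by assumption) | exact False.elim (by assumption)

lemma tD_sq (k : ℕ) : tD k * tD k = 1 := by
  ext x
  rw [Equiv.Perm.mul_apply, Equiv.Perm.one_apply, tD_apply, tD_apply, tf_tf]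

lemma tD_invol (k : ℕ) : (tD k)⁻¹ = tD k := by
  rw [inv_eq_iff_mul_eq_one, tD_sq]

lemma tD_fix {k : ℕ} {x : ℤ} (h : (k:ℤ)+1 < |x|) (h2 : 2 < |x|) : tD k x = x := by
  rw [tD_apply]
  rcases abs_cases x with ⟨h1,h1'⟩|⟨h1,h1'⟩ <;> rw [h1] at h h2 <;> rcases cast_cases k with h3|h3 <;>
    unfold tf <;> split_ifs <;>
    first | omega | exact absurd rfl (by assumption) | exact False.elim (by assumption)

lemma tD_pos {k : ℕ} (hk : k ≠ 0) {x : ℤ} : 0 < tD k x ↔ 0 < x := by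
  have hk : 1 ≤ (k:ℤ) := by
    have := Nat.one_le_iff_ne_zero.mpr hk; exact_mod_cast this
  rw [tD_apply]
  unfold tf
  rw [if_neg (by omega)]
  split_ifs <;> omega


lemma tD_apply' (k : ℕ) (hk : k ≠ 0) (x : ℤ) : tD k x = if x = k then (k:ℤ)+1 else if x = (k:ℤ)+1 then k else if x = -(k:ℤ)-1 then -k else if x = -k then -(k:ℤ)-1 else x := by
  rw [tD_apply]
  unfold tf
  rw [if_neg hk]

lemma tD0_apply (x : ℤ) : tD 0 x = if x = -2 then 1 else if x = 1 then -2 else if x = -1 then 2 else if x = 2 then -1 else x := by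
  rw [tD_apply]
  unfold tf
  rw [if_pos rfl]

open Equiv Finset


noncomputable def Pairs (n : ℕ) : Finset (ℤ × ℤ) :=
  (Finset.Icc (1:ℤ) n ×ˢ Finset.Icc (1:ℤ) n).filter fun p => p.1 < p.2

def trm (w : Equiv.Perm ℤ) (p : ℤ × ℤ) : ℕ :=
  (if w p.2 < w p.1 then 1 else 0) + (if w p.1 + w p.2 < 0 then 1 else 0)

noncomputable def Nst (n : ℕ) (w : Equiv.Perm ℤ) : ℕ := ∑ p ∈ Pairs n, trm w p

lemma mem_Pairs {n : ℕ} {p : ℤ × ℤ} :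
    p ∈ Pairs n ↔ 1 ≤ p.1 ∧ p.1 < p.2 ∧ p.2 ≤ (n:ℤ) := by
  unfold Pairs
  simp only [Finset.mem_filter, Finset.mem_product, Finset.mem_Icc]
  omega

lemma Nst_asc_pos {n k : ℕ} (hk1 : k ≠ 0) (hkn : k + 1 ≤ n) (w : Equiv.Perm ℤ)
    (hasc : w k < w ((k:ℤ)+1)) : Nst n (w * tD k) = Nst n w + 1 := by
  have hkz : 1 ≤ (k:ℤ) := by exact_mod_cast Nat.one_le_iff_ne_zero.mpr hk1
  have hknz : (k:ℤ) + 1 ≤ (n:ℤ) := by exact_mod_cast hkn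
  have hp : ((k:ℤ), (k:ℤ)+1) ∈ Pairs n := mem_Pairs.mpr (by constructor <;> simp <;> omega)
  have hbox : ∀ x : ℤ, 1 ≤ x → tD k x = if x = k then (k:ℤ)+1 else if x = (k:ℤ)+1 then k else x := by
    intro x hx
    rw [tD_apply' k hk1]
    split_ifs <;> omega
  unfold Nst
  rw [← Finset.sum_erase_add _ _ hp, ← Finset.sum_erase_add _ _ hp]
  have h1 : trm (w * tD k) ((k:ℤ), (k:ℤ)+1) = trm w ((k:ℤ), (k:ℤ)+1) + 1 := by
    unfold trm
    simp only [Equiv.Perm.mul_apply]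
    simp only [show tD k (k:ℤ) = (k:ℤ)+1 by rw [hbox _ hkz]; simp,
        show tD k ((k:ℤ)+1) = (k:ℤ) by rw [hbox _ (by omega)]; split_ifs <;> omega]
    split_ifs <;> omega
  have h2 : ∑ p ∈ (Pairs n).erase ((k:ℤ), (k:ℤ)+1), trm (w * tD k) p
      = ∑ p ∈ (Pairs n).erase ((k:ℤ), (k:ℤ)+1), trm w p := by
    apply Finset.sum_nbij' (i := fun p => (tD k p.1, tD k p.2)) (j := fun p => (tD k p.1, tD k p.2))
    · rintro ⟨p1, p2⟩ hmem
      rw [Finset.mem_erase, mem_Pairs] at hmem ⊢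
      obtain ⟨hne, hm1, hm2, hm3⟩ := hmem
      rw [Ne, Prod.mk.injEq, not_and_or] at hne
      simp only at hm1 hm2 hm3 hne ⊢
      rw [hbox _ (by omega), hbox _ (by omega)]
      rw [Ne, Prod.mk.injEq, not_and_or]
      split_ifs <;> omega
    · rintro ⟨p1, p2⟩ hmem
      rw [Finset.mem_erase, mem_Pairs] at hmem ⊢
      obtain ⟨hne, hm1, hm2, hm3⟩ := hmem
      rw [Ne, Prod.mk.injEq, not_and_or] at hne
      simp only at hm1 hm2 hm3 hne ⊢
      rw [hbox _ (by omega), hbox _ (by omega)]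
      rw [Ne, Prod.mk.injEq, not_and_or]
      split_ifs <;> omega
    · rintro ⟨p1, p2⟩ _
      have : ∀ x : ℤ, tD k (tD k x) = x := by
        intro x
        have := congrArg (fun s => s x) (tD_sq k)
        simpa using this
      simp [this]
    · rintro ⟨p1, p2⟩ _
      have : ∀ x : ℤ, tD k (tD k x) = x := by
        intro x
        have := congrArg (fun s => s x) (tD_sq k)
        simpa using this
      simp [this]
    · rintro ⟨p1, p2⟩ _
      unfold trm
      simp only [Equiv.Perm.mul_apply]
      rfl
  omega


open Equiv Finset






/-- the "swap 1 2" on positions -/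
def sw (x : ℤ) : ℤ := if x = 1 then 2 else if x = 2 then 1 else x

lemma Nst_asc_zero {n : ℕ} (hn : 2 ≤ n) (w : Equiv.Perm ℤ)
    (hanti : ∀ x : ℤ, w (-x) = -(w x))
    (hasc : 0 < w 1 + w 2) : Nst n (w * tD 0) = Nst n w + 1 := by
  have hnz : (2:ℤ) ≤ (n:ℤ) := by exact_mod_cast hn
  have hp : ((1:ℤ), (2:ℤ)) ∈ Pairs n := mem_Pairs.mpr (by refine ⟨by norm_num, by norm_num, hnz⟩)
  have e1 : (w * tD 0) 1 = -(w 2) := by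
    rw [Equiv.Perm.mul_apply, show tD 0 1 = -2 by rw [tD0_apply]; norm_num,
        show (-2 : ℤ) = -(2:ℤ) by norm_num, hanti]
  have e2 : (w * tD 0) 2 = -(w 1) := by
    rw [Equiv.Perm.mul_apply, show tD 0 2 = -1 by rw [tD0_apply]; norm_num,
        show (-1 : ℤ) = -(1:ℤ) by norm_num, hanti]
  have e3 : ∀ x : ℤ, 3 ≤ x → (w * tD 0) x = w x := by
    intro x hx
    rw [Equiv.Perm.mul_apply, show tD 0 x = x by rw [tD0_apply]; split_ifs <;> omega]
  unfold Nst
  rw [← Finset.sum_erase_add _ _ hp, ← Finset.sum_erase_add _ _ hp]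
  have h1 : trm (w * tD 0) ((1:ℤ), (2:ℤ)) = trm w ((1:ℤ), (2:ℤ)) + 1 := by
    unfold trm
    simp only [e1, e2]
    split_ifs <;> omega
  have h2 : ∑ p ∈ (Pairs n).erase ((1:ℤ), (2:ℤ)), trm (w * tD 0) p
      = ∑ p ∈ (Pairs n).erase ((1:ℤ), (2:ℤ)), trm w p := by
    apply Finset.sum_nbij' (i := fun p => (sw p.1, sw p.2)) (j := fun p => (sw p.1, sw p.2))
    · rintro ⟨p1, p2⟩ hmem
      rw [Finset.mem_erase, mem_Pairs] at hmem ⊢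
      obtain ⟨hne, hm1, hm2, hm3⟩ := hmem
      rw [Ne, Prod.mk.injEq, not_and_or] at hne
      simp only at hm1 hm2 hm3 hne ⊢
      rw [Ne, Prod.mk.injEq, not_and_or]
      unfold sw
      split_ifs <;> omega
    · rintro ⟨p1, p2⟩ hmem
      rw [Finset.mem_erase, mem_Pairs] at hmem ⊢
      obtain ⟨hne, hm1, hm2, hm3⟩ := hmem
      rw [Ne, Prod.mk.injEq, not_and_or] at hne
      simp only at hm1 hm2 hm3 hne ⊢
      rw [Ne, Prod.mk.injEq, not_and_or]
      unfold sw
      split_ifs <;> omega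
    · rintro ⟨p1, p2⟩ _
      have : ∀ x : ℤ, sw (sw x) = x := by intro x; unfold sw; split_ifs <;> omega
      simp [this]
    · rintro ⟨p1, p2⟩ _
      have : ∀ x : ℤ, sw (sw x) = x := by intro x; unfold sw; split_ifs <;> omega
      simp [this]
    · rintro ⟨p1, p2⟩ hmem
      rw [Finset.mem_erase, mem_Pairs] at hmem
      obtain ⟨hne, hm1, hm2, hm3⟩ := hmem
      rw [Ne, Prod.mk.injEq, not_and_or] at hne
      simp only at hm1 hm2 hm3 hne
      unfold trm sw
      rcases eq_or_ne p1 1 with rfl|h1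
      · have hp2 : 3 ≤ p2 := by omega
        simp only [if_pos rfl, e1, e3 p2 hp2, if_neg (by omega : ¬ p2 = 1), if_neg (by omega : ¬ p2 = 2)]
        split_ifs <;> omega
      · rcases eq_or_ne p1 2 with rfl|h2
        · have hp2 : 3 ≤ p2 := by omega
          simp only [if_neg (by omega : ¬ (2:ℤ) = 1), if_pos rfl, e2, e3 p2 hp2,
            if_neg (by omega : ¬ p2 = 1), if_neg (by omega : ¬ p2 = 2)]
          split_ifs <;> omega
        · have hp1 : 3 ≤ p1 := by omega
          have hp2 : 3 ≤ p2 := by omega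
          simp only [if_neg (by omega : ¬ p1 = 1), if_neg (by omega : ¬ p1 = 2),
            if_neg (by omega : ¬ p2 = 1), if_neg (by omega : ¬ p2 = 2), e3 p1 hp1, e3 p2 hp2]
  omega


open Equiv Finset



lemma tD_tD (k : ℕ) (x : ℤ) : tD k (tD k x) = x := by
  have := congrArg (fun s => s x) (tD_sq k)
  simpa using this

lemma mul_tD_tD (w : Equiv.Perm ℤ) (k : ℕ) : w * tD k * tD k = w := by
  rw [mul_assoc, tD_sq, mul_one]

lemma anti_mul_tD {w : Equiv.Perm ℤ} (hanti : ∀ x : ℤ, w (-x) = -(w x)) (k : ℕ) :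
    ∀ x : ℤ, (w * tD k) (-x) = -((w * tD k) x) := by
  intro x
  rw [Equiv.Perm.mul_apply, Equiv.Perm.mul_apply, tD_antisym, hanti]

lemma Nst_desc_pos {n k : ℕ} (hk1 : k ≠ 0) (hkn : k + 1 ≤ n) (w : Equiv.Perm ℤ)
    (hdesc : w ((k:ℤ)+1) < w k) : Nst n w = Nst n (w * tD k) + 1 := by
  have hkz : 1 ≤ (k:ℤ) := by exact_mod_cast Nat.one_le_iff_ne_zero.mpr hk1
  have e1 : (w * tD k) k = w ((k:ℤ)+1) := by
    rw [Equiv.Perm.mul_apply, tD_apply' k hk1]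
    congr 1
    split_ifs <;> omega
  have e2 : (w * tD k) ((k:ℤ)+1) = w k := by
    rw [Equiv.Perm.mul_apply, tD_apply' k hk1]
    congr 1
    split_ifs <;> omega
  have := Nst_asc_pos hk1 hkn (w * tD k) (by rw [e1, e2]; exact hdesc)
  rw [mul_tD_tD] at this
  omega

lemma Nst_desc_zero {n : ℕ} (hn : 2 ≤ n) (w : Equiv.Perm ℤ)
    (hanti : ∀ x : ℤ, w (-x) = -(w x))
    (hdesc : w 1 + w 2 < 0) : Nst n w = Nst n (w * tD 0) + 1 := by
  have e1 : (w * tD 0) 1 = -(w 2) := by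
    rw [Equiv.Perm.mul_apply, show tD 0 1 = -(2:ℤ) by rw [tD0_apply]; norm_num, hanti]
  have e2 : (w * tD 0) 2 = -(w 1) := by
    rw [Equiv.Perm.mul_apply, show tD 0 2 = -(1:ℤ) by rw [tD0_apply]; norm_num, hanti]
  have := Nst_asc_zero hn (w * tD 0) (anti_mul_tD hanti 0) (by rw [e1, e2]; omega)
  rw [mul_tD_tD] at this
  omega

lemma Dgrp_zero {w : Equiv.Perm ℤ} {n : ℕ} (hw : w ∈ Dgrp n) : w 0 = 0 := by
  have := hw.1 0
  simp at this
  omega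

lemma Dgrp_ne_zero {w : Equiv.Perm ℤ} {n : ℕ} (hw : w ∈ Dgrp n) {x : ℤ} (hx : x ≠ 0) :
    w x ≠ 0 := by
  intro h
  exact hx (w.injective (by rw [h, Dgrp_zero hw]))

lemma Dgrp_bound {w : Equiv.Perm ℤ} {n : ℕ} (hw : w ∈ Dgrp n) {x : ℤ} (hx : |x| ≤ n) :
    |w x| ≤ n := by
  by_contra h
  push_neg at h
  have h2 := hw.2.1 (w x) h
  have h3 := w.injective h2
  rw [h3] at h
  omega

lemma Dgrp_one (n : ℕ) : (1 : Equiv.Perm ℤ) ∈ Dgrp n := by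
  refine ⟨fun i => rfl, fun i _ => rfl, ?_⟩
  have : (Finset.Icc (1 : ℤ) (n : ℤ)).filter (fun i => (1 : Equiv.Perm ℤ) i < 0) = ∅ := by
    apply Finset.filter_false_of_mem
    intro i hi
    rw [Finset.mem_Icc] at hi
    simp only [Equiv.Perm.one_apply]
    omega
  rw [this]
  simp

lemma Dgrp_mul_tD {w : Equiv.Perm ℤ} {n k : ℕ} (hn : 2 ≤ n) (hw : w ∈ Dgrp n) (hk : k + 1 ≤ n) :
    w * tD k ∈ Dgrp n := by
  obtain ⟨hanti, hsupp, hpar⟩ := hw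
  refine ⟨anti_mul_tD hanti k, ?_, ?_⟩
  · intro x hx
    rw [Equiv.Perm.mul_apply, tD_fix (by omega) (by omega)]
    exact hsupp x hx
  · rcases eq_or_ne k 0 with rfl|hk0
    · -- k = 0 : parity changes by even amount
      rw [Nat.even_iff] at hpar ⊢
      have key : ∀ (u : Equiv.Perm ℤ),
          ((Finset.Icc (1 : ℤ) (n : ℤ)).filter (fun i => u i < 0)).card
          = ∑ i ∈ Finset.Icc (1 : ℤ) (n : ℤ), (if u i < 0 then 1 else 0) := by
        intro u
        rw [Finset.card_filter]
      rw [key] at hpar ⊢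
      have h2m : (2:ℤ) ∈ Finset.Icc (1:ℤ) (n:ℤ) := by 
        rw [Finset.mem_Icc]; constructor <;> omega
      have h1m : (1:ℤ) ∈ (Finset.Icc (1:ℤ) (n:ℤ)).erase 2 := by
        rw [Finset.mem_erase, Finset.mem_Icc]
        refine ⟨by norm_num, by omega, by omega⟩
      rw [← Finset.sum_erase_add _ _ h2m, ← Finset.sum_erase_add _ _ h1m] at hpar ⊢
      have hrest : ∑ i ∈ ((Finset.Icc (1:ℤ) (n:ℤ)).erase 2).erase 1,
          (if (w * tD 0) i < 0 then 1 else 0)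
          = ∑ i ∈ ((Finset.Icc (1:ℤ) (n:ℤ)).erase 2).erase 1, (if w i < 0 then 1 else 0) := by
        apply Finset.sum_congr rfl
        intro i hi
        rw [Finset.mem_erase, Finset.mem_erase, Finset.mem_Icc] at hi
        rw [Equiv.Perm.mul_apply, show tD 0 i = i by rw [tD0_apply]; split_ifs <;> omega]
      have e1 : (w * tD 0) 1 = -(w 2) := by
        rw [Equiv.Perm.mul_apply, show tD 0 1 = -(2:ℤ) by rw [tD0_apply]; norm_num, hanti]
      have e2 : (w * tD 0) 2 = -(w 1) := by
        rw [Equiv.Perm.mul_apply, show tD 0 2 = -(1:ℤ) by rw [tD0_apply]; norm_num, hanti]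
      rw [hrest, e1, e2]
      have hw0 : w 0 = 0 := by have := hanti 0; simp at this; omega
      have hw1 : w 1 ≠ 0 := fun h => one_ne_zero (w.injective (by rw [h, hw0]))
      have hw2 : w 2 ≠ 0 := fun h => two_ne_zero (w.injective (by rw [h, hw0]))
      split_ifs at hpar ⊢ <;> omega
    · -- k ≥ 1 : sign pattern unchanged
      have hkz : 1 ≤ (k:ℤ) := by exact_mod_cast Nat.one_le_iff_ne_zero.mpr hk0
      have hbox : ∀ x : ℤ, 1 ≤ x → tD k x = if x = k then (k:ℤ)+1 else if x = (k:ℤ)+1 then k else x := by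
        intro x hx
        rw [tD_apply' k hk0]
        split_ifs <;> omega
      have : (Finset.Icc (1 : ℤ) (n : ℤ)).filter (fun i => (w * tD k) i < 0)
          = ((Finset.Icc (1 : ℤ) (n : ℤ)).filter (fun i => w i < 0)).image (tD k) := by
        ext x
        simp only [Finset.mem_filter, Finset.mem_image, Finset.mem_Icc]
        simp only [Equiv.Perm.mul_apply]
        constructor
        · rintro ⟨⟨hx1, hx2⟩, hneg⟩
          refine ⟨tD k x, ⟨?_, hneg⟩, tD_tD k x⟩
          rw [hbox x hx1]
          split_ifs <;> constructor <;> omega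
        · rintro ⟨a, ⟨⟨ha1, ha2⟩, hneg⟩, rfl⟩
          have h1 : tD k a = if a = (k:ℤ) then (k:ℤ)+1 else if a = (k:ℤ)+1 then (k:ℤ) else a := hbox a ha1
          rw [tD_tD]
          refine ⟨?_, hneg⟩
          rw [h1]
          split_ifs <;> constructor <;> omega
      rw [this, Finset.card_image_of_injective _ (tD k).injective]
      exact hpar

theorem _root_.Equiv.Perm.apply_inv_self {α : Type*} (f : Equiv.Perm α) (x : α) : f (f⁻¹ x) = x :=
  Equiv.apply_symm_apply f x

theorem _root_.Equiv.Perm.inv_apply_self {α : Type*} (f : Equiv.Perm α) (x : α) : f⁻¹ (f x) = x :=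
  Equiv.symm_apply_apply f x

lemma Dgrp_inv {w : Equiv.Perm ℤ} {n : ℕ} (hw : w ∈ Dgrp n) : w⁻¹ ∈ Dgrp n := by
  obtain ⟨hanti, hsupp, hpar⟩ := hw
  have hanti' : ∀ i : ℤ, w⁻¹ (-i) = -(w⁻¹ i) := by
    intro i
    apply w.injective
    rw [Equiv.Perm.apply_inv_self, hanti, Equiv.Perm.apply_inv_self]
  have hsupp' : ∀ i : ℤ, (n:ℤ) < |i| → w⁻¹ i = i := by
    intro i hi
    have := hsupp i hi
    conv_lhs => rw [← this]
    rw [Equiv.Perm.inv_apply_self]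
  refine ⟨hanti', hsupp', ?_⟩
  have hw' : w ∈ Dgrp n := ⟨hanti, hsupp, hpar⟩
  have hwi : w⁻¹ ∈ ({v | (∀ i : ℤ, v (-i) = -(v i)) ∧ (∀ i : ℤ, (n : ℤ) < |i| → v i = i)} : Set (Equiv.Perm ℤ)) := ⟨hanti', hsupp'⟩
  have key : ((Finset.Icc (1 : ℤ) (n : ℤ)).filter (fun i => w⁻¹ i < 0)).card
      = ((Finset.Icc (1 : ℤ) (n : ℤ)).filter (fun i => w i < 0)).card := by
    apply Finset.card_nbij' (i := fun x => -(w⁻¹ x)) (j := fun x => -(w x))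
    · intro x hx
      beta_reduce
      rw [Finset.mem_coe, Finset.mem_filter, Finset.mem_Icc] at hx ⊢
      obtain ⟨⟨hx1, hx2⟩, hneg⟩ := hx
      have hb : |w⁻¹ x| ≤ (n:ℤ) := by
        by_contra hc
        push_neg at hc
        have h2 := hsupp _ hc
        rw [Equiv.Perm.apply_inv_self] at h2
        rw [← h2] at hc
        omega
      have hb' := abs_le.mp hb
      refine ⟨⟨by omega, by omega⟩, ?_⟩
      rw [hanti, Equiv.Perm.apply_inv_self]
      omega
    · intro x hx
      beta_reduce
      rw [Finset.mem_coe, Finset.mem_filter, Finset.mem_Icc] at hx ⊢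
      obtain ⟨⟨hx1, hx2⟩, hneg⟩ := hx
      have hb : |w x| ≤ (n:ℤ) := by
        by_contra hc
        push_neg at hc
        have h2 := hsupp _ hc
        have h3 := w.injective h2
        omega
      have hb' := abs_le.mp hb
      refine ⟨⟨by omega, by omega⟩, ?_⟩
      rw [hanti', Equiv.Perm.inv_apply_self]
      omega
    · intro x _
      beta_reduce
      rw [hanti, neg_neg, Equiv.Perm.apply_inv_self]
    · intro x _
      beta_reduce
      rw [hanti', neg_neg, Equiv.Perm.inv_apply_self]
  rw [key]
  exact hpar

lemma Dgrp_tD_mul {w : Equiv.Perm ℤ} {n k : ℕ} (hw : w ∈ Dgrp n) (hk : k + 1 ≤ n)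
    (hk0 : k ≠ 0) : tD k * w ∈ Dgrp n := by
  obtain ⟨hanti, hsupp, hpar⟩ := hw
  refine ⟨?_, ?_, ?_⟩
  · intro x
    rw [Equiv.Perm.mul_apply, Equiv.Perm.mul_apply, hanti, tD_antisym]
  · intro x hx
    rw [Equiv.Perm.mul_apply, hsupp x hx, tD_fix (by omega) ?h2]
    case h2 =>
      have hkz : (1:ℤ) ≤ (k:ℤ) := by exact_mod_cast Nat.one_le_iff_ne_zero.mpr hk0
      omega
  · have : (Finset.Icc (1 : ℤ) (n : ℤ)).filter (fun i => (tD k * w) i < 0)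
        = (Finset.Icc (1 : ℤ) (n : ℤ)).filter (fun i => w i < 0) := by
      apply Finset.filter_congr
      intro x _
      simp only [Equiv.Perm.mul_apply, decide_eq_decide]
      constructor
      · intro h
        by_contra hc
        push_neg at hc
        rcases lt_or_eq_of_le hc with hpos|heq
        · have := (tD_pos hk0).mpr hpos
          omega
        · rw [← heq] at h
          rw [show tD k 0 = 0 by have := tD_antisym k 0; simp at this; omega] at h
          omega
      · intro h
        by_contra hc
        push_neg at hc
        have h0 : tD k (w x) ≠ 0 := by
          intro hz
          have h0' : tD k (0:ℤ) = 0 := by have := tD_antisym k 0; simp at this; omega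
          have := (tD k).injective (hz.trans h0'.symm)
          omega
        have hpos : 0 < tD k (w x) := by omega
        have := (tD_pos hk0).mp hpos
        omega
    rw [this]
    exact hpar


lemma anti_prod (l : List ℕ) : ∀ x : ℤ, ((l.map tD).prod) (-x) = -(((l.map tD).prod) x) := by
  induction l with
  | nil => intro x; simp
  | cons k l ih =>
    intro x
    simp only [List.map_cons, List.prod_cons, Equiv.Perm.mul_apply]
    rw [ih, tD_antisym]

open Equiv Finset


/-- fixed points of a product of odd generators -/
lemma prodOdd_fix (l : List ℕ) (hodd : ∀ k ∈ l, k % 2 = 1) (x : ℤ)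
    (hx : ∀ k ∈ l, x ≠ k ∧ x ≠ (k:ℤ)+1 ∧ x ≠ -(k:ℤ) ∧ x ≠ -(k:ℤ)-1) :
    ((l.map tD).prod) x = x := by
  induction l with
  | nil => simp
  | cons k0 tl ih =>
    simp only [List.map_cons, List.prod_cons, Equiv.Perm.mul_apply]
    rw [ih (fun k hk => hodd k (List.mem_cons_of_mem _ hk))
        (fun k hk => hx k (List.mem_cons_of_mem _ hk))]
    obtain ⟨h1, h2, h3, h4⟩ := hx k0 List.mem_cons_self
    have hk0 : k0 ≠ 0 := by
      have := hodd k0 List.mem_cons_self; omega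
    rw [tD_apply' k0 hk0]
    split_ifs with a b c d <;> first | exact absurd a h1 | exact absurd b h2 | exact absurd c h4 | exact absurd d h3 | rfl

/-- values of a product of odd generators at its support -/
lemma prodOdd_val (l : List ℕ) (hodd : ∀ k ∈ l, k % 2 = 1) (hnd : l.Nodup)
    {k : ℕ} (hk : k ∈ l) :
    ((l.map tD).prod) k = (k:ℤ)+1 ∧ ((l.map tD).prod) ((k:ℤ)+1) = k := by
  induction l with
  | nil => simp at hk
  | cons k0 tl ih =>
    have hoddk : k % 2 = 1 := hodd k hk
    have hkne0 : k ≠ 0 := by omega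
    have hkz : 1 ≤ (k:ℤ) := by exact_mod_cast Nat.one_le_iff_ne_zero.mpr hkne0
    have hodd0 : k0 % 2 = 1 := hodd k0 List.mem_cons_self
    have hk0ne : k0 ≠ 0 := by omega
    have hk0z : 1 ≤ (k0:ℤ) := by exact_mod_cast Nat.one_le_iff_ne_zero.mpr hk0ne
    simp only [List.map_cons, List.prod_cons, Equiv.Perm.mul_apply]
    have hndtl := (List.nodup_cons.mp hnd).2
    have hk0tl := (List.nodup_cons.mp hnd).1
    rcases List.mem_cons.mp hk with rfl|hktl
    · -- k = k0
      have e1 : ((tl.map tD).prod) (k:ℤ) = (k:ℤ) := by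
        apply prodOdd_fix tl (fun k' hk' => hodd k' (List.mem_cons_of_mem _ hk'))
        intro k' hk'
        have hodd' : k' % 2 = 1 := hodd k' (List.mem_cons_of_mem _ hk')
        have hne : k ≠ k' := fun h => hk0tl (h ▸ hk')
        have h1 : (k':ℤ) % 2 = 1 := by omega
        have h2 : (k:ℤ) % 2 = 1 := by omega
        have hk'z : 1 ≤ (k':ℤ) := by
          have : k' ≠ 0 := by omega
          exact_mod_cast Nat.one_le_iff_ne_zero.mpr this
        refine ⟨?_, ?_, ?_, ?_⟩ <;> intro hcon
        · exact hne (by exact_mod_cast hcon)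
        · omega
        · omega
        · omega
      have e2 : ((tl.map tD).prod) ((k:ℤ)+1) = (k:ℤ)+1 := by
        apply prodOdd_fix tl (fun k' hk' => hodd k' (List.mem_cons_of_mem _ hk'))
        intro k' hk'
        have hodd' : k' % 2 = 1 := hodd k' (List.mem_cons_of_mem _ hk')
        have hne : k ≠ k' := fun h => hk0tl (h ▸ hk')
        have hk'z : 1 ≤ (k':ℤ) := by
          have : k' ≠ 0 := by omega
          exact_mod_cast Nat.one_le_iff_ne_zero.mpr this
        have hnez : (k:ℤ) ≠ (k':ℤ) := by exact_mod_cast hne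
        refine ⟨?_, ?_, ?_, ?_⟩ <;> omega
      rw [e1, e2, tD_apply' k hkne0, tD_apply' k hkne0]
      constructor
      · rw [if_pos rfl]
      · rw [if_neg (by omega), if_pos rfl]
    · -- k in the tail
      have hnek0 : k ≠ k0 := fun h => hk0tl (h ▸ hktl)
      have hnez : (k:ℤ) ≠ (k0:ℤ) := by exact_mod_cast hnek0
      obtain ⟨e1, e2⟩ := ih (fun k' hk' => hodd k' (List.mem_cons_of_mem _ hk')) hndtl hktl
      rw [e1, e2, tD_apply' k0 hk0ne, tD_apply' k0 hk0ne]
      constructor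
      · split_ifs <;> omega
      · split_ifs <;> omega

lemma mem_oddList {n k : ℕ} : k ∈ (List.range n).filter (fun i => i % 2 == 1) ↔ k < n ∧ k % 2 = 1 := by
  rw [List.mem_filter, List.mem_range]
  simp

lemma oddList_nodup (n : ℕ) : ((List.range n).filter (fun i => i % 2 == 1)).Nodup :=
  (List.nodup_range (n := n)).filter _

lemma oddList_odd (n : ℕ) : ∀ k ∈ (List.range n).filter (fun i => i % 2 == 1), k % 2 = 1 :=
  fun k hk => (mem_oddList.mp hk).2

lemma yfpf_val {n k : ℕ} (hk : k % 2 = 1) (hkn : k < n) :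
    yfpf n (k:ℤ) = (k:ℤ)+1 ∧ yfpf n ((k:ℤ)+1) = (k:ℤ) :=
  prodOdd_val _ (oddList_odd n) (oddList_nodup n) (mem_oddList.mpr ⟨hkn, hk⟩)

lemma yfpf_anti (n : ℕ) : ∀ x : ℤ, yfpf n (-x) = -(yfpf n x) := anti_prod _

lemma yfpf_fix_outside {n : ℕ} {x : ℤ} (hx : (n:ℤ) < |x|) : yfpf n x = x := by
  apply prodOdd_fix _ (oddList_odd n)
  intro k hk
  obtain ⟨hkn, hko⟩ := mem_oddList.mp hk
  have hknz : (k:ℤ) < n := by exact_mod_cast hkn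
  have hkz : 0 ≤ (k:ℤ) := Int.natCast_nonneg k
  rcases abs_cases x with ⟨h1,h2⟩|⟨h1,h2⟩ <;> refine ⟨?_,?_,?_,?_⟩ <;> omega

lemma yfpf_box_pos {n : ℕ} (hn : Even n) {x : ℤ} (hx1 : 1 ≤ x) (hxn : x ≤ (n:ℤ)) :
    (0 < yfpf n x) ∧ (yfpf n x ≤ (n:ℤ)) := by
  set k : ℕ := x.toNat with hkdef
  have hkx : (k:ℤ) = x := by omega
  rcases Nat.even_or_odd k with he|ho
  · -- x even : yfpf x = x - 1
    have hk1 : (k-1) % 2 = 1 := by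
      obtain ⟨c, hc⟩ := he; omega
    have hk1n : k - 1 < n := by
      have : (k:ℤ) ≤ n := by omega
      have hkn : k ≤ n := by exact_mod_cast this
      have : k ≠ 0 := by
        intro h; rw [h] at hkx; omega
      omega
    obtain ⟨_, e2⟩ := yfpf_val hk1 hk1n
    have : ((k-1:ℕ):ℤ) + 1 = x := by
      have : k ≠ 0 := by intro h; rw [h] at hkx; omega
      push_cast [Nat.cast_sub (by omega : 1 ≤ k)]
      omega
    rw [← this, e2]
    constructor
    · have : k ≠ 0 := by intro h; rw [h] at hkx; omega
      have : 1 ≤ k := by omega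
      omega
    · omega
  · -- x odd : yfpf x = x + 1, and x < n because n is even
    have hko : k % 2 = 1 := Nat.odd_iff.mp ho
    have hkn : k < n := by
      have hkle : (k:ℤ) ≤ n := by omega
      have hkle' : k ≤ n := by exact_mod_cast hkle
      rcases eq_or_lt_of_le hkle' with rfl|h
      · exfalso
        obtain ⟨c, hc⟩ := hn
        omega
      · exact h
    obtain ⟨e1, _⟩ := yfpf_val hko hkn
    rw [← hkx, e1]
    constructor
    · omega
    · have : (k:ℤ) + 1 ≤ n := by
        have : k + 1 ≤ n := by omega
        exact_mod_cast this
      omega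

lemma yfpf_Dgrp {n : ℕ} (hn : Even n) : yfpf n ∈ Dgrp n := by
  refine ⟨yfpf_anti n, fun x hx => yfpf_fix_outside hx, ?_⟩
  have : (Finset.Icc (1 : ℤ) (n : ℤ)).filter (fun i => yfpf n i < 0) = ∅ := by
    apply Finset.filter_false_of_mem
    intro x hx
    rw [Finset.mem_Icc] at hx
    have := (yfpf_box_pos hn hx.1 hx.2).1
    omega
  rw [this]
  simp

lemma yfpf_invol (n : ℕ) (hn : Even n) : (yfpf n)⁻¹ = yfpf n := by
  rw [inv_eq_iff_mul_eq_one]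
  ext x
  rw [Equiv.Perm.mul_apply, Equiv.Perm.one_apply]
  -- reduce to nonneg x by antisymmetry
  suffices h : ∀ z : ℤ, 0 ≤ z → yfpf n (yfpf n z) = z by
    rcases le_or_gt 0 x with hx|hx
    · exact h x hx
    · have := h (-x) (by omega)
      rw [yfpf_anti, yfpf_anti] at this
      omega
  intro z hz
  rcases eq_or_lt_of_le hz with rfl|hz1
  · have h0 : yfpf n 0 = 0 := by
      have := yfpf_anti n 0; simp at this; omega
    rw [h0, h0]
  · rcases le_or_gt z (n:ℤ) with hzn|hzn
    · set k : ℕ := z.toNat with hkdef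
      have hkx : (k:ℤ) = z := by omega
      rcases Nat.even_or_odd k with he|ho
      · have hk1 : (k-1) % 2 = 1 := by obtain ⟨c, hc⟩ := he; omega
        have hkne : k ≠ 0 := by intro h; rw [h] at hkx; omega
        have hk1n : k - 1 < n := by
          have : k ≤ n := by exact_mod_cast (by omega : (k:ℤ) ≤ n)
          omega
        obtain ⟨e1, e2⟩ := yfpf_val hk1 hk1n
        have hcast : ((k-1:ℕ):ℤ) + 1 = z := by
          push_cast [Nat.cast_sub (by omega : 1 ≤ k)]
          omega
        rw [← hcast, e2, e1]
      · have hko : k % 2 = 1 := Nat.odd_iff.mp ho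
        have hkn : k < n := by
          have hle : k ≤ n := by exact_mod_cast (by omega : (k:ℤ) ≤ n)
          rcases eq_or_lt_of_le hle with rfl|h
          · exfalso; obtain ⟨c, hc⟩ := hn; omega
          · exact h
        obtain ⟨e1, e2⟩ := yfpf_val hko hkn
        rw [← hkx, e1, e2]
    · have hz' : yfpf n z = z := yfpf_fix_outside (by rw [abs_of_nonneg] <;> omega)
      rw [hz', hz']


open Equiv Finset





/-- A `Dgrp` element with no descent is the identity. -/
lemma eq_one_of_no_descent {n : ℕ} (hn : 2 ≤ n) {w : Equiv.Perm ℤ} (hw : w ∈ Dgrp n)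
    (hinc : ∀ a : ℤ, 1 ≤ a → a + 1 ≤ (n:ℤ) → w a ≤ w (a+1))
    (h12 : 0 < w 1 + w 2) : w = 1 := by
  have hnz : (2:ℤ) ≤ (n:ℤ) := by exact_mod_cast hn
  obtain ⟨hanti, hsupp, hpar⟩ := hw
  have hw' : w ∈ Dgrp n := ⟨hanti, hsupp, hpar⟩
  have mono : ∀ a b : ℤ, 1 ≤ a → a ≤ b → b ≤ (n:ℤ) → w a ≤ w b := by
    intro a b ha hab hbn
    have key : ∀ c : ℤ, a ≤ c → (c ≤ (n:ℤ) → w a ≤ w c) := by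
      refine Int.le_induction (fun _ => le_refl _) ?_
      intro c hc ih hcn
      exact le_trans (ih (by omega)) (hinc c (by omega) (by omega))
    exact key b hab hbn
  -- w 2 > 0
  have h2pos : 0 < w 2 := by
    have := mono 1 2 (by norm_num) (by norm_num) hnz
    omega
  have hposge2 : ∀ x : ℤ, 2 ≤ x → x ≤ (n:ℤ) → 0 < w x := by
    intro x hx hxn
    have := mono 2 x (by norm_num) hx hxn
    omega
  -- w 1 > 0 by parity
  have h1pos : 0 < w 1 := by
    rcases lt_trichotomy (w 1) 0 with hneg|hz|hpos
    · exfalso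
      have : (Finset.Icc (1 : ℤ) (n : ℤ)).filter (fun i => w i < 0) = {1} := by
        ext x
        rw [Finset.mem_filter, Finset.mem_Icc, Finset.mem_singleton]
        constructor
        · rintro ⟨⟨hx1, hx2⟩, hneg'⟩
          by_contra hne
          have := hposge2 x (by omega) hx2
          omega
        · rintro rfl
          exact ⟨⟨le_refl _, by omega⟩, hneg⟩
      rw [this] at hpar
      simp at hpar
    · exact absurd (w.injective (by rw [hz, Dgrp_zero hw'] : w 1 = w 0)) (by norm_num)
    · exact hpos
  have hpos : ∀ x : ℤ, 1 ≤ x → x ≤ (n:ℤ) → 0 < w x := by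
    intro x hx hxn
    rcases eq_or_lt_of_le hx with rfl|h
    · exact h1pos
    · exact hposge2 x (by omega) hxn
  -- strict monotonicity
  have smono : ∀ a b : ℤ, 1 ≤ a → a < b → b ≤ (n:ℤ) → w a < w b := by
    intro a b ha hab hbn
    have h1 := mono a b ha (le_of_lt hab) hbn
    rcases eq_or_lt_of_le h1 with he|h
    · exact absurd (w.injective he) (by omega)
    · exact h
  -- lower bound : x ≤ w x on the box
  have lower : ∀ x : ℤ, 1 ≤ x → x ≤ (n:ℤ) → x ≤ w x := by
    refine Int.le_induction (fun _ => h1pos) ?_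
    intro c hc ih hcn
    have h1 := ih (by omega)
    have h2 := smono c (c+1) hc (by omega) hcn
    omega
  -- w⁻¹ is also monotone etc.
  have hwib : w⁻¹ ∈ Dgrp n := Dgrp_inv hw'
  have hipos : ∀ x : ℤ, 1 ≤ x → x ≤ (n:ℤ) → 0 < w⁻¹ x := by
    intro x hx hxn
    by_contra hc
    push_neg at hc
    have hb : |w⁻¹ x| ≤ (n:ℤ) := Dgrp_bound hwib (by rw [abs_of_nonneg] <;> omega)
    have hb' := abs_le.mp hb
    have hne : w⁻¹ x ≠ 0 := by
      intro h0
      have : x = w 0 := by rw [← h0, Equiv.Perm.apply_inv_self]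
      rw [Dgrp_zero hw'] at this
      omega
    have : w (-(w⁻¹ x)) = -x := by rw [hanti, Equiv.Perm.apply_inv_self]
    have hp := hpos (-(w⁻¹ x)) (by omega) (by omega)
    omega
  have himono : ∀ a : ℤ, 1 ≤ a → a + 1 ≤ (n:ℤ) → w⁻¹ a < w⁻¹ (a+1) := by
    intro a ha han
    by_contra hc
    push_neg at hc
    have hne : w⁻¹ a ≠ w⁻¹ (a+1) := fun h => by
      have := congrArg w h
      rw [Equiv.Perm.apply_inv_self, Equiv.Perm.apply_inv_self] at this
      omega
    have hlt : w⁻¹ (a+1) < w⁻¹ a := by omega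
    have hb1 : |w⁻¹ a| ≤ (n:ℤ) := Dgrp_bound hwib (by rw [abs_of_nonneg] <;> omega)
    have := mono (w⁻¹ (a+1)) (w⁻¹ a) (hipos (a+1) (by omega) (by omega)) (le_of_lt hlt)
      ((abs_le.mp hb1).2
      )
    rw [Equiv.Perm.apply_inv_self, Equiv.Perm.apply_inv_self] at this
    omega
  have ilower : ∀ x : ℤ, 1 ≤ x → x ≤ (n:ℤ) → x ≤ w⁻¹ x := by
    refine Int.le_induction (fun _ => hipos 1 (by norm_num) (by omega)) ?_
    intro c hc ih hcn
    have h1 := ih (by omega)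
    have h2 := himono c hc hcn
    omega
  -- conclude w x = x on the box
  have hfix : ∀ x : ℤ, 1 ≤ x → x ≤ (n:ℤ) → w x = x := by
    intro x hx hxn
    have h1 := lower x hx hxn
    have h2 := ilower x hx hxn
    have hb : |w⁻¹ x| ≤ (n:ℤ) := Dgrp_bound hwib (by rw [abs_of_nonneg] <;> omega)
    have h3 := mono x (w⁻¹ x) hx h2 (abs_le.mp hb).2
    rw [Equiv.Perm.apply_inv_self] at h3
    omega
  ext x
  rcases lt_trichotomy x 0 with hneg|rfl|hposx
  · rcases lt_or_ge x (-(n:ℤ)) with h|h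
    · rw [hsupp x (by rw [abs_of_nonpos] <;> omega)]
      rfl
    · have : w (-(-x)) = -(w (-x)) := hanti (-x)
      rw [neg_neg] at this
      rw [this, hfix (-x) (by omega) (by omega)]
      simp
  · rw [Dgrp_zero hw']
    rfl
  · rcases le_or_gt x (n:ℤ) with h|h
    · rw [hfix x (by omega) h]
      rfl
    · rw [hsupp x (by rw [abs_of_nonneg] <;> omega)]
      rfl

lemma Nst_one (n : ℕ) : Nst n 1 = 0 := by
  unfold Nst
  apply Finset.sum_eq_zero
  intro p hp
  rw [mem_Pairs] at hp
  unfold trm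
  rw [if_neg (show ¬ (1 : Equiv.Perm ℤ) p.2 < (1 : Equiv.Perm ℤ) p.1 by
      rw [Equiv.Perm.one_apply, Equiv.Perm.one_apply]; omega),
    if_neg (show ¬ (1 : Equiv.Perm ℤ) p.1 + (1 : Equiv.Perm ℤ) p.2 < 0 by
      rw [Equiv.Perm.one_apply, Equiv.Perm.one_apply]; omega)]
  rfl



lemma Nst_mul_le {n k : ℕ} (hn : 2 ≤ n) (hk : k + 1 ≤ n) (w : Equiv.Perm ℤ)
    (hanti : ∀ x : ℤ, w (-x) = -(w x)) :
    Nst n (w * tD k) ≤ Nst n w + 1 := by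
  have hw0 : w 0 = 0 := by have := hanti 0; simp at this; omega
  rcases eq_or_ne k 0 with rfl|hk0
  · have hne : w 1 + w 2 ≠ 0 := by
      intro h
      have h1 : w 2 = -(w 1) := by omega
      have h2 : w 2 = w (-1) := by rw [h1, ← hanti]
      have := w.injective h2
      omega
    rcases lt_or_gt_of_ne hne with hlt|hgt
    · rw [Nst_desc_zero hn w hanti hlt]
      omega
    · rw [Nst_asc_zero hn w hanti hgt]
  · have hne : w k ≠ w ((k:ℤ)+1) := fun h => by
      have := w.injective h
      omega
    rcases lt_or_gt_of_ne hne with hlt|hgt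
    · rw [Nst_asc_pos hk0 hk w hlt]
    · rw [Nst_desc_pos hk0 hk w hgt]
      omega

lemma Nst_le_words {n : ℕ} (hn : 2 ≤ n) (l : List ℕ) (hl : ∀ i ∈ l, i < n) :
    Nst n ((l.map tD).prod) ≤ l.length := by
  induction l using List.reverseRecOn with
  | nil => simp [Nst_one]
  | append_singleton l k ih =>
    have hk : k + 1 ≤ n := hl k (by simp)
    have hl' : ∀ i ∈ l, i < n := fun i hi => hl i (by simp [hi])
    have h1 : ((l ++ [k]).map tD).prod = (l.map tD).prod * tD k := by
      simp
    rw [h1]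
    calc Nst n ((l.map tD).prod * tD k) ≤ Nst n ((l.map tD).prod) + 1 :=
          Nst_mul_le hn hk _ (anti_prod l)
      _ ≤ l.length + 1 := by have := ih hl'; omega
      _ = (l ++ [k]).length := by simp

/-- existence of a word of length exactly `Nst n w` -/
lemma word_of_Nst {n : ℕ} (hn : 2 ≤ n) :
    ∀ (m : ℕ) (w : Equiv.Perm ℤ), w ∈ Dgrp n → Nst n w = m →
    ∃ l : List ℕ, (∀ i ∈ l, i < n) ∧ (l.map tD).prod = w ∧ l.length = m := by
  intro m
  induction m using Nat.strong_induction_on with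
  | _ m ih =>
    intro w hw hNst
    rcases eq_or_ne w 1 with rfl|hne
    · refine ⟨[], by simp, by simp, ?_⟩
      rw [← hNst, Nst_one]
      simp
    · -- find a descent
      have hdesc : (∃ k : ℕ, k ≠ 0 ∧ k + 1 ≤ n ∧ w ((k:ℤ)+1) < w k) ∨ (w 1 + w 2 < 0) := by
        by_contra hc
        push_neg at hc
        obtain ⟨hc1, hc2⟩ := hc
        apply hne
        apply eq_one_of_no_descent hn hw
        · intro a ha han
          set k : ℕ := a.toNat with hk
          have hka : (k:ℤ) = a := by omega
          have hk0 : k ≠ 0 := by omega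
          have hkn : k + 1 ≤ n := by omega
          have := hc1 k hk0 hkn
          rw [hka] at this
          omega
        · have hne2 : w 1 + w 2 ≠ 0 := by
            intro h
            have h1 : w 2 = -(w 1) := by omega
            have h2 : w 2 = w (-1) := by rw [h1, ← hw.1]
            have := w.injective h2
            omega
          omega
      rcases hdesc with ⟨k, hk0, hkn, hdesc⟩|hdesc
      · have hstep := Nst_desc_pos hk0 hkn w hdesc
        have hmem : w * tD k ∈ Dgrp n := Dgrp_mul_tD hn hw hkn
        have hlt : Nst n (w * tD k) < m := by omega
        obtain ⟨l, hl1, hl2, hl3⟩ := ih _ hlt (w * tD k) hmem rfl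
        refine ⟨l ++ [k], ?_, ?_, ?_⟩
        · intro i hi
          rcases List.mem_append.mp hi with h|h
          · exact hl1 i h
          · simp at h
            omega
        · simp only [List.map_append, List.prod_append, List.map_cons, List.map_nil,
            List.prod_cons, List.prod_nil, mul_one, hl2]
          exact mul_tD_tD w k
        · simp only [List.length_append, List.length_cons, List.length_nil, hl3]
          omega
      · have hstep := Nst_desc_zero hn w hw.1 hdesc
        have hmem : w * tD 0 ∈ Dgrp n := Dgrp_mul_tD hn hw (by omega)
        have hlt : Nst n (w * tD 0) < m := by omega
        obtain ⟨l, hl1, hl2, hl3⟩ := ih _ hlt (w * tD 0) hmem rfl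
        refine ⟨l ++ [0], ?_, ?_, ?_⟩
        · intro i hi
          rcases List.mem_append.mp hi with h|h
          · exact hl1 i h
          · simp at h
            omega
        · simp only [List.map_append, List.prod_append, List.map_cons, List.map_nil,
            List.prod_cons, List.prod_nil, mul_one, hl2]
          exact mul_tD_tD w 0
        · simp only [List.length_append, List.length_cons, List.length_nil, hl3]
          omega

theorem lenD_eq {n : ℕ} (hn : 2 ≤ n) {w : Equiv.Perm ℤ} (hw : w ∈ Dgrp n) :
    lenD n w = Nst n w := by
  obtain ⟨l, hl1, hl2, hl3⟩ := word_of_Nst hn (Nst n w) w hw rfl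
  apply le_antisymm
  · exact Nat.sInf_le ⟨l, hl1, hl2, hl3⟩
  · refine le_csInf ⟨Nst n w, l, hl1, hl2, hl3⟩ ?_
    rintro m ⟨l', hl1', hl2', hl3'⟩
    rw [← hl3', ← hl2']
    exact Nst_le_words hn l' hl1'


lemma prod_reverse_inv (l : List ℕ) : ((l.map tD).prod)⁻¹ = ((l.reverse.map tD).prod) := by
  induction l with
  | nil => simp
  | cons k l ih =>
    simp only [List.map_cons, List.prod_cons, mul_inv_rev, ih, List.reverse_cons,
      List.map_append, List.prod_append, List.map_cons, List.map_nil, List.prod_cons,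
      List.prod_nil, mul_one]
    congr 1
    exact tD_invol k

theorem lenD_inv (n : ℕ) (w : Equiv.Perm ℤ) : lenD n w⁻¹ = lenD n w := by
  unfold lenD
  congr 1
  ext m
  constructor
  · rintro ⟨l, h1, h2, h3⟩
    refine ⟨l.reverse, fun i hi => h1 i (List.mem_reverse.mp hi), ?_, by simp [h3]⟩
    rw [← prod_reverse_inv, h2, inv_inv]
  · rintro ⟨l, h1, h2, h3⟩
    refine ⟨l.reverse, fun i hi => h1 i (List.mem_reverse.mp hi), ?_, by simp [h3]⟩
    rw [← prod_reverse_inv, h2]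


open Equiv Finset



section helpers
variable {n : ℕ}

lemma lenR_asc (hn2 : 2 ≤ n) {u : Equiv.Perm ℤ} (hu : u ∈ Dgrp n) {k : ℕ} (hk0 : k ≠ 0)
    (hk : k + 1 ≤ n) (hasc : u k < u ((k:ℤ)+1)) :
    lenD n (u * tD k) = lenD n u + 1 := by
  rw [lenD_eq hn2 (Dgrp_mul_tD hn2 hu hk), lenD_eq hn2 hu]
  exact Nst_asc_pos hk0 hk u hasc

lemma lenR_desc (hn2 : 2 ≤ n) {u : Equiv.Perm ℤ} (hu : u ∈ Dgrp n) {k : ℕ} (hk0 : k ≠ 0)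
    (hk : k + 1 ≤ n) (hdesc : u ((k:ℤ)+1) < u k) :
    lenD n u = lenD n (u * tD k) + 1 := by
  rw [lenD_eq hn2 (Dgrp_mul_tD hn2 hu hk), lenD_eq hn2 hu]
  exact Nst_desc_pos hk0 hk u hdesc

variable (dem : Equiv.Perm ℤ → Equiv.Perm ℤ → Equiv.Perm ℤ)

lemma dem_right_asc (hn2 : 2 ≤ n)
    (hright : ∀ w ∈ Dgrp n, ∀ i : ℕ, i < n →
      dem w (tD i) = if lenD n (w * tD i) = lenD n w + 1 then w * tD i else w)
    {u : Equiv.Perm ℤ} (hu : u ∈ Dgrp n) {k : ℕ} (hk0 : k ≠ 0) (hk : k + 1 ≤ n)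
    (hasc : u k < u ((k:ℤ)+1)) : dem u (tD k) = u * tD k := by
  rw [hright u hu k (by omega), if_pos (lenR_asc hn2 hu hk0 hk hasc)]

lemma dem_right_desc (hn2 : 2 ≤ n)
    (hright : ∀ w ∈ Dgrp n, ∀ i : ℕ, i < n →
      dem w (tD i) = if lenD n (w * tD i) = lenD n w + 1 then w * tD i else w)
    {u : Equiv.Perm ℤ} (hu : u ∈ Dgrp n) {k : ℕ} (hk0 : k ≠ 0) (hk : k + 1 ≤ n)
    (hdesc : u ((k:ℤ)+1) < u k) : dem u (tD k) = u := by
  rw [hright u hu k (by omega), if_neg]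
  have := lenR_desc hn2 hu hk0 hk hdesc
  omega

lemma dem_left_asc (hn2 : 2 ≤ n)
    (hleft : ∀ w ∈ Dgrp n, ∀ i : ℕ, i < n →
      dem (tD i) w = if lenD n (tD i * w) = lenD n w + 1 then tD i * w else w)
    {u : Equiv.Perm ℤ} (hu : u ∈ Dgrp n) {k : ℕ} (hk0 : k ≠ 0) (hk : k + 1 ≤ n)
    (hasc : u⁻¹ k < u⁻¹ ((k:ℤ)+1)) : dem (tD k) u = tD k * u := by
  rw [hleft u hu k (by omega), if_pos]
  have h1 : (tD k * u)⁻¹ = u⁻¹ * tD k := by rw [mul_inv_rev, tD_invol]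
  rw [← lenD_inv n (tD k * u), h1, lenR_asc hn2 (Dgrp_inv hu) hk0 hk hasc, lenD_inv]

lemma dem_left_desc (hn2 : 2 ≤ n)
    (hleft : ∀ w ∈ Dgrp n, ∀ i : ℕ, i < n →
      dem (tD i) w = if lenD n (tD i * w) = lenD n w + 1 then tD i * w else w)
    {u : Equiv.Perm ℤ} (hu : u ∈ Dgrp n) {k : ℕ} (hk0 : k ≠ 0) (hk : k + 1 ≤ n)
    (hdesc : u⁻¹ ((k:ℤ)+1) < u⁻¹ k) : dem (tD k) u = u := by
  rw [hleft u hu k (by omega), if_neg]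
  have h1 : (tD k * u)⁻¹ = u⁻¹ * tD k := by rw [mul_inv_rev, tD_invol]
  have h2 := lenR_desc hn2 (Dgrp_inv hu) hk0 hk hdesc
  have h3 := lenD_inv n (tD k * u)
  rw [h1] at h3
  have h4 := lenD_inv n u
  omega

/-- Step A : a minimal-length twisted conjugator has ascents at odd positions. -/
lemma stepA (hne : Even n)
    (hassoc : ∀ u v w, dem (dem u v) w = dem u (dem v w))
    (hright : ∀ w ∈ Dgrp n, ∀ i : ℕ, i < n →
      dem w (tD i) = if lenD n (w * tD i) = lenD n w + 1 then w * tD i else w)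
    (hleft : ∀ w ∈ Dgrp n, ∀ i : ℕ, i < n →
      dem (tD i) w = if lenD n (tD i * w) = lenD n w + 1 then tD i * w else w)
    (z : Equiv.Perm ℤ)
    (w : Equiv.Perm ℤ) (hw : w ∈ Dgrp n)
    (hwz : dem (dem w (yfpf n)) w⁻¹ = z)
    (hmin : ∀ v ∈ Dgrp n, dem (dem v (yfpf n)) v⁻¹ = z → lenD n w ≤ lenD n v)
    (j : ℕ) (hj : j % 2 = 1) (hjn : j + 1 ≤ n) :
    w (j:ℤ) < w ((j:ℤ)+1) := by
  have hn2 : 2 ≤ n := by omega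
  have hj0 : j ≠ 0 := by omega
  by_contra hc
  push_neg at hc
  have hne' : w ((j:ℤ)+1) ≠ w (j:ℤ) := fun h => by
    have := w.injective h; omega
  have hdesc : w ((j:ℤ)+1) < w (j:ℤ) := by
    rcases lt_or_eq_of_le hc with h|h
    · exact h
    · exact absurd h hne'
  set y := yfpf n with hydef
  have hy : y ∈ Dgrp n := yfpf_Dgrp hne
  have hyinv : y⁻¹ = y := yfpf_invol n hne
  obtain ⟨hyj1, hyj2⟩ := yfpf_val (n := n) hj (by omega)
  set v := w * tD j with hvdef
  have hv : v ∈ Dgrp n := Dgrp_mul_tD hn2 hw hjn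
  have hvw : v * tD j = w := mul_tD_tD w j
  have hjz : 1 ≤ (j:ℤ) := by exact_mod_cast Nat.one_le_iff_ne_zero.mpr hj0
  have hvj1 : v (j:ℤ) = w ((j:ℤ)+1) := by
    rw [hvdef, Equiv.Perm.mul_apply]
    congr 1
    rw [tD_apply' j hj0]
    split_ifs <;> omega
  have hvj2 : v ((j:ℤ)+1) = w (j:ℤ) := by
    rw [hvdef, Equiv.Perm.mul_apply]
    congr 1
    rw [tD_apply' j hj0]
    split_ifs <;> omega
  have hvasc : v (j:ℤ) < v ((j:ℤ)+1) := by rw [hvj1, hvj2]; exact hdesc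
  have lenv : lenD n w = lenD n v + 1 := by
    have := lenR_asc hn2 hv hj0 hjn hvasc
    rw [hvw] at this
    omega
  -- dem computations
  have step1 : dem v (tD j) = w := by
    rw [dem_right_asc dem hn2 hright hv hj0 hjn hvasc, hvw]
  have step2 : dem (tD j) y = y := by
    apply dem_left_desc dem hn2 hleft hy hj0 hjn
    rw [hyinv, hyj1, hyj2]
    omega
  have step3 : dem (tD j) v⁻¹ = w⁻¹ := by
    have h1 : dem (tD j) v⁻¹ = tD j * v⁻¹ := by
      apply dem_left_asc dem hn2 hleft (Dgrp_inv hv) hj0 hjn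
      rw [inv_inv]
      exact hvasc
    have h2 : tD j * v⁻¹ = w⁻¹ := by
      rw [hvdef, mul_inv_rev, mul_inv_cancel_left]
    rw [h1, h2]
  have step4 : dem y (tD j) = y := by
    apply dem_right_desc dem hn2 hright hy hj0 hjn
    rw [hyj1, hyj2]
    omega
  have eq1 : dem w y = dem v y := by
    rw [← step1, hassoc, step2]
  have hzv : dem (dem v y) v⁻¹ = z := by
    rw [← hwz, eq1, ← step3, ← hassoc (dem v y) (tD j) v⁻¹, hassoc v y (tD j), step4]
  have := hmin v hv hzv
  omega

theorem stmt19_aux (n : ℕ) (hn : Even n)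
    (dem : Equiv.Perm ℤ → Equiv.Perm ℤ → Equiv.Perm ℤ)
    (hassoc : ∀ u v w, dem (dem u v) w = dem u (dem v w))
    (hone : ∀ w, dem w 1 = w ∧ dem 1 w = w)
    (hright : ∀ w ∈ Dgrp n, ∀ i : ℕ, i < n →
      dem w (tD i) = if lenD n (w * tD i) = lenD n w + 1 then w * tD i else w)
    (hleft : ∀ w ∈ Dgrp n, ∀ i : ℕ, i < n →
      dem (tD i) w = if lenD n (tD i * w) = lenD n w + 1 then tD i * w else w)
    (z : Equiv.Perm ℤ) (hz : z ∈ Dgrp n) (hzi : z⁻¹ = z)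
    (hfpf : ∀ i : ℤ, 1 ≤ i → i ≤ (n : ℤ) → z i ≠ i)
    (w : Equiv.Perm ℤ) (hw : w ∈ Dgrp n)
    (hwz : dem (dem w (yfpf n)) w⁻¹ = z)
    (hmin : ∀ v ∈ Dgrp n, dem (dem v (yfpf n)) v⁻¹ = z → lenD n w ≤ lenD n v)
    (i : ℤ) (hi1 : 1 ≤ i) (hin : i ≤ (n : ℤ) - 3) (hodd : Odd i)
    (hdesc : w (i + 3) < w (i + 1)) :
    ∃ A B C D : ℤ, A < B ∧ B < C ∧ C < D ∧
      w i = A ∧ w (i + 1) = D ∧ w (i + 2) = B ∧ w (i + 3) = C := by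
  have hn2 : 2 ≤ n := by
    have h4 : (4:ℤ) ≤ (n:ℤ) := by omega
    have : (2:ℤ) ≤ (n:ℤ) := by omega
    exact_mod_cast this
  set p : ℕ := i.toNat with hpdef
  have hpi : (p:ℤ) = i := by omega
  have hpodd : p % 2 = 1 := by
    obtain ⟨m, hm⟩ := hodd
    omega
  have hp0 : p ≠ 0 := by omega
  have hpn : (p:ℤ) + 3 ≤ (n:ℤ) := by omega
  have hpn' : p + 3 ≤ n := by exact_mod_cast hpn
  have cq : ((p+1:ℕ):ℤ) = i + 1 := by push_cast; omega
  have cr : ((p+2:ℕ):ℤ) = i + 2 := by push_cast; omega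
  have e23 : (i:ℤ) + 1 + 1 = i + 2 := by ring
  have e34 : (i:ℤ) + 2 + 1 = i + 3 := by ring
  -- step A at p and p+2
  have hAD : w i < w (i+1) := by
    have := stepA dem hn hassoc hright hleft z w hw hwz hmin p hpodd (by omega)
    rwa [hpi] at this
  have hBC : w (i+2) < w (i+3) := by
    have := stepA dem hn hassoc hright hleft z w hw hwz hmin (p+2) (by omega) (by omega)
    rwa [cr, e34] at this
  have hbd : w (i+2) < w (i+1) := by omega
  -- the key claim
  have hAB : w i < w (i+2) := by
    by_contra hc
    push_neg at hc
    have hne' : w (i+2) ≠ w i := fun h => by have := w.injective h; omega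
    have hba : w (i+2) < w i := by
      rcases lt_or_eq_of_le hc with h|h
      · exact h
      · exact absurd h hne'
    clear hc hne'
    set y := yfpf n with hydef
    have hy : y ∈ Dgrp n := yfpf_Dgrp hn
    have hyinv : y⁻¹ = y := yfpf_invol n hn
    -- values of y on the window
    have hyv1 := yfpf_val (n := n) hpodd (by omega)
    have hyv2 := yfpf_val (n := n) (k := p+2) (by omega) (by omega)
    rw [hpi] at hyv1
    rw [cr, e34] at hyv2
    obtain ⟨hyi1, hyi2⟩ := hyv1
    obtain ⟨hyi3, hyi4⟩ := hyv2
    -- values of the three generators on the window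
    have tq1 : tD (p+1) i = i := by rw [tD_apply' (p+1) (by omega)]; split_ifs <;> omega
    have tq2 : tD (p+1) (i+1) = i+2 := by rw [tD_apply' (p+1) (by omega)]; split_ifs <;> omega
    have tq3 : tD (p+1) (i+2) = i+1 := by rw [tD_apply' (p+1) (by omega)]; split_ifs <;> omega
    have tq4 : tD (p+1) (i+3) = i+3 := by rw [tD_apply' (p+1) (by omega)]; split_ifs <;> omega
    have tp1 : tD p i = i+1 := by rw [tD_apply' p (by omega)]; split_ifs <;> omega
    have tp2 : tD p (i+1) = i := by rw [tD_apply' p (by omega)]; split_ifs <;> omega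
    have tp3 : tD p (i+2) = i+2 := by rw [tD_apply' p (by omega)]; split_ifs <;> omega
    have tp4 : tD p (i+3) = i+3 := by rw [tD_apply' p (by omega)]; split_ifs <;> omega
    have tr1 : tD (p+2) (i+2) = i+3 := by rw [tD_apply' (p+2) (by omega)]; split_ifs <;> omega
    have tr2 : tD (p+2) (i+3) = i+2 := by rw [tD_apply' (p+2) (by omega)]; split_ifs <;> omega
    have tr3 : tD (p+2) i = i := by rw [tD_apply' (p+2) (by omega)]; split_ifs <;> omega
    have tr4 : tD (p+2) (i+1) = i+1 := by rw [tD_apply' (p+2) (by omega)]; split_ifs <;> omega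
    -- the elements
    set v1 : Equiv.Perm ℤ := w * tD (p+1) with hv1def
    set v2 : Equiv.Perm ℤ := v1 * tD p with hv2def
    set v3 : Equiv.Perm ℤ := v2 * tD (p+2) with hv3def
    set u1 : Equiv.Perm ℤ := v3 * tD p with hu1def
    set u2 : Equiv.Perm ℤ := u1 * tD (p+1) with hu2def
    set y2 : Equiv.Perm ℤ := tD (p+1) * y * tD (p+1) with hy2def
    set y3 : Equiv.Perm ℤ := tD p * y2 * tD p with hy3def
    -- memberships
    have hv1g : v1 ∈ Dgrp n := Dgrp_mul_tD hn2 hw (by omega)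
    have hv2g : v2 ∈ Dgrp n := Dgrp_mul_tD hn2 hv1g (by omega)
    have hv3g : v3 ∈ Dgrp n := Dgrp_mul_tD hn2 hv2g (by omega)
    have hu1g : u1 ∈ Dgrp n := Dgrp_mul_tD hn2 hv3g (by omega)
    have hu2g : u2 ∈ Dgrp n := Dgrp_mul_tD hn2 hu1g (by omega)
    have hqyg : tD (p+1) * y ∈ Dgrp n := Dgrp_tD_mul hy (by omega) (by omega)
    have hy2g : y2 ∈ Dgrp n := by
      rw [hy2def]
      exact Dgrp_mul_tD hn2 hqyg (by omega)
    have hpy2g : tD p * y2 ∈ Dgrp n := Dgrp_tD_mul hy2g (by omega) (by omega)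
    have hy3g : y3 ∈ Dgrp n := by
      rw [hy3def]
      exact Dgrp_mul_tD hn2 hpy2g (by omega)
    have hytg : y * tD (p+1) ∈ Dgrp n := Dgrp_mul_tD hn2 hy (by omega)
    have hy2tg : y2 * tD p ∈ Dgrp n := Dgrp_mul_tD hn2 hy2g (by omega)
    -- involutions
    have hy2inv : y2⁻¹ = y2 := by
      rw [hy2def, mul_inv_rev, mul_inv_rev, tD_invol, hyinv, ← mul_assoc]
    have hy3inv : y3⁻¹ = y3 := by
      rw [hy3def, mul_inv_rev, mul_inv_rev, tD_invol, hy2inv, ← mul_assoc]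
    -- window values
    have hv1a : v1 i = w i := by rw [hv1def, Equiv.Perm.mul_apply, tq1]
    have hv1b : v1 (i+1) = w (i+2) := by rw [hv1def, Equiv.Perm.mul_apply, tq2]
    have hv1c : v1 (i+2) = w (i+1) := by rw [hv1def, Equiv.Perm.mul_apply, tq3]
    have hv1d : v1 (i+3) = w (i+3) := by rw [hv1def, Equiv.Perm.mul_apply, tq4]
    have hv2a : v2 i = w (i+2) := by rw [hv2def, Equiv.Perm.mul_apply, tp1, hv1b]
    have hv2b : v2 (i+1) = w i := by rw [hv2def, Equiv.Perm.mul_apply, tp2, hv1a]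
    have hv2c : v2 (i+2) = w (i+1) := by rw [hv2def, Equiv.Perm.mul_apply, tp3, hv1c]
    have hv2d : v2 (i+3) = w (i+3) := by rw [hv2def, Equiv.Perm.mul_apply, tp4, hv1d]
    have hv3a : v3 i = w (i+2) := by rw [hv3def, Equiv.Perm.mul_apply, tr3, hv2a]
    have hv3b : v3 (i+1) = w i := by rw [hv3def, Equiv.Perm.mul_apply, tr4, hv2b]
    have hv3c : v3 (i+2) = w (i+3) := by rw [hv3def, Equiv.Perm.mul_apply, tr1, hv2d]
    have hv3d : v3 (i+3) = w (i+1) := by rw [hv3def, Equiv.Perm.mul_apply, tr2, hv2c]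
    have hu1b : u1 (i+1) = w (i+2) := by rw [hu1def, Equiv.Perm.mul_apply, tp2, hv3a]
    have hu1c : u1 (i+2) = w (i+3) := by rw [hu1def, Equiv.Perm.mul_apply, tp3, hv3c]
    have hy2a : y2 i = i+2 := by
      rw [hy2def, Equiv.Perm.mul_apply, Equiv.Perm.mul_apply, tq1, hyi1, tq2]
    have hy2b : y2 (i+1) = i+3 := by
      rw [hy2def, Equiv.Perm.mul_apply, Equiv.Perm.mul_apply, tq2, hyi3, tq4]
    have hy2c : y2 (i+2) = i := by
      rw [hy2def, Equiv.Perm.mul_apply, Equiv.Perm.mul_apply, tq3, hyi2, tq1]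
    have hy2d : y2 (i+3) = i+1 := by
      rw [hy2def, Equiv.Perm.mul_apply, Equiv.Perm.mul_apply, tq4, hyi4, tq3]
    have hqy1 : (tD (p+1) * y) (i+1) = i := by
      rw [Equiv.Perm.mul_apply, hyi2, tq1]
    have hqy2 : (tD (p+1) * y) (i+2) = i+3 := by
      rw [Equiv.Perm.mul_apply, hyi3, tq4]
    have hpy1 : (tD p * y2) i = i+2 := by
      rw [Equiv.Perm.mul_apply, hy2a, tp3]
    have hpy2v : (tD p * y2) (i+1) = i+3 := by
      rw [Equiv.Perm.mul_apply, hy2b, tp4]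
    have hy3c : y3 (i+2) = i+1 := by
      rw [hy3def, Equiv.Perm.mul_apply, Equiv.Perm.mul_apply, tp3, hy2c, tp1]
    have hy3d : y3 (i+3) = i := by
      rw [hy3def, Equiv.Perm.mul_apply, Equiv.Perm.mul_apply, tp4, hy2d, tp2]
    -- product collapses
    have hv1w : v1 * tD (p+1) = w := by rw [hv1def]; exact mul_tD_tD w (p+1)
    have hv2v1 : v2 * tD p = v1 := by rw [hv2def]; exact mul_tD_tD v1 p
    have hv3v2 : v3 * tD (p+2) = v2 := by rw [hv3def]; exact mul_tD_tD v2 (p+2)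
    -- length chain
    have l1 : lenD n w = lenD n v1 + 1 := by
      have := lenR_desc hn2 hw (k := p+1) (by omega) (by omega) (by rw [cq, e23]; exact hbd)
      rw [← hv1def] at this
      exact this
    have l2 : lenD n v1 = lenD n v2 + 1 := by
      have := lenR_desc hn2 hv1g (k := p) hp0 (by omega)
        (by rw [hpi, hv1b, hv1a]; exact hba)
      rw [← hv2def] at this
      exact this
    have l3 : lenD n v2 = lenD n v3 + 1 := by
      have := lenR_desc hn2 hv2g (k := p+2) (by omega) (by omega)
        (by rw [cr, e34, hv2d, hv2c]; exact hdesc)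
      rw [← hv3def] at this
      exact this
    have l4 : lenD n u1 = lenD n v3 + 1 := by
      have := lenR_asc hn2 hv3g (k := p) hp0 (by omega)
        (by rw [hpi, hv3a, hv3b]; exact hba)
      rw [← hu1def] at this
      exact this
    have l5 : lenD n u2 = lenD n u1 + 1 := by
      have := lenR_asc hn2 hu1g (k := p+1) (by omega) (by omega)
        (by rw [cq, e23, hu1b, hu1c]; exact hBC)
      rw [← hu2def] at this
      exact this
    -- dem steps, phase 1
    have A1 : dem v1 (tD (p+1)) = w := by
      rw [dem_right_asc dem hn2 hright hv1g (by omega) (by omega)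
        (by rw [cq, e23, hv1b, hv1c]; exact hbd), hv1w]
    have A2 : dem (tD (p+1)) y = tD (p+1) * y := by
      apply dem_left_asc dem hn2 hleft hy (by omega) (by omega)
      rw [hyinv, cq, e23, hyi2, hyi3]
      omega
    have A3 : dem (tD (p+1)) v1⁻¹ = w⁻¹ := by
      have h1 : dem (tD (p+1)) v1⁻¹ = tD (p+1) * v1⁻¹ := by
        apply dem_left_asc dem hn2 hleft (Dgrp_inv hv1g) (by omega) (by omega)
        rw [inv_inv, cq, e23, hv1b, hv1c]
        exact hbd
      have h2 : tD (p+1) * v1⁻¹ = w⁻¹ := by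
        rw [hv1def, mul_inv_rev, mul_inv_cancel_left]
      rw [h1, h2]
    have A4 : dem (tD (p+1) * y) (tD (p+1)) = y2 := by
      rw [dem_right_asc dem hn2 hright hqyg (by omega) (by omega)
        (by rw [cq, e23, hqy1, hqy2]; omega), hy2def]
    have E1 : dem w y = dem v1 (tD (p+1) * y) := by
      rw [← A1, hassoc, A2]
    have z1 : dem (dem v1 y2) v1⁻¹ = z := by
      rw [← hwz]
      calc dem (dem v1 y2) v1⁻¹
          = dem (dem (dem v1 (tD (p+1) * y)) (tD (p+1))) v1⁻¹ := by
            rw [hassoc v1 (tD (p+1) * y) (tD (p+1)), A4]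
        _ = dem (dem v1 (tD (p+1) * y)) (dem (tD (p+1)) v1⁻¹) := hassoc _ _ _
        _ = dem (dem v1 (tD (p+1) * y)) w⁻¹ := by rw [A3]
        _ = dem (dem w y) w⁻¹ := by rw [E1]
    -- phase 2
    have B1 : dem v2 (tD p) = v1 := by
      rw [dem_right_asc dem hn2 hright hv2g hp0 (by omega)
        (by rw [hpi, hv2a, hv2b]; exact hba), hv2v1]
    have B2 : dem (tD p) y2 = tD p * y2 := by
      apply dem_left_asc dem hn2 hleft hy2g hp0 (by omega)
      rw [hy2inv, hpi, hy2a, hy2b]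
      omega
    have B3 : dem (tD p) v2⁻¹ = v1⁻¹ := by
      have h1 : dem (tD p) v2⁻¹ = tD p * v2⁻¹ := by
        apply dem_left_asc dem hn2 hleft (Dgrp_inv hv2g) hp0 (by omega)
        rw [inv_inv, hpi, hv2a, hv2b]
        exact hba
      have h2 : tD p * v2⁻¹ = v1⁻¹ := by
        rw [hv2def, mul_inv_rev, mul_inv_cancel_left]
      rw [h1, h2]
    have B4 : dem (tD p * y2) (tD p) = y3 := by
      rw [dem_right_asc dem hn2 hright hpy2g hp0 (by omega)
        (by rw [hpi, hpy1, hpy2v]; omega), hy3def]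
    have E2 : dem v1 y2 = dem v2 (tD p * y2) := by
      rw [← B1, hassoc, B2]
    have z2 : dem (dem v2 y3) v2⁻¹ = z := by
      rw [← z1]
      calc dem (dem v2 y3) v2⁻¹
          = dem (dem (dem v2 (tD p * y2)) (tD p)) v2⁻¹ := by
            rw [hassoc v2 (tD p * y2) (tD p), B4]
        _ = dem (dem v2 (tD p * y2)) (dem (tD p) v2⁻¹) := hassoc _ _ _
        _ = dem (dem v2 (tD p * y2)) v1⁻¹ := by rw [B3]
        _ = dem (dem v1 y2) v1⁻¹ := by rw [E2]
    -- phase 3 : absorb tD (p+2)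
    have C1 : dem v3 (tD (p+2)) = v2 := by
      rw [dem_right_asc dem hn2 hright hv3g (by omega) (by omega)
        (by rw [cr, e34, hv3c, hv3d]; exact hdesc), hv3v2]
    have C2 : dem (tD (p+2)) y3 = y3 := by
      apply dem_left_desc dem hn2 hleft hy3g (by omega) (by omega)
      rw [hy3inv, cr, e34, hy3c, hy3d]
      omega
    have C3 : dem (tD (p+2)) v3⁻¹ = v2⁻¹ := by
      have h1 : dem (tD (p+2)) v3⁻¹ = tD (p+2) * v3⁻¹ := by
        apply dem_left_asc dem hn2 hleft (Dgrp_inv hv3g) (by omega) (by omega)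
        rw [inv_inv, cr, e34, hv3c, hv3d]
        exact hdesc
      have h2 : tD (p+2) * v3⁻¹ = v2⁻¹ := by
        rw [hv3def, mul_inv_rev, mul_inv_cancel_left]
      rw [h1, h2]
    have C4 : dem y3 (tD (p+2)) = y3 := by
      apply dem_right_desc dem hn2 hright hy3g (by omega) (by omega)
      rw [cr, e34, hy3c, hy3d]
      omega
    have z3 : dem (dem v3 y3) v3⁻¹ = z := by
      rw [← z2]
      calc dem (dem v3 y3) v3⁻¹
          = dem (dem v3 (dem y3 (tD (p+2)))) v3⁻¹ := by rw [C4]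
        _ = dem (dem (dem v3 y3) (tD (p+2))) v3⁻¹ := by rw [hassoc v3 y3 (tD (p+2))]
        _ = dem (dem v3 y3) (dem (tD (p+2)) v3⁻¹) := hassoc _ _ _
        _ = dem (dem v3 y3) v2⁻¹ := by rw [C3]
        _ = dem (dem v3 (dem (tD (p+2)) y3)) v2⁻¹ := by rw [C2]
        _ = dem (dem (dem v3 (tD (p+2))) y3) v2⁻¹ := by rw [hassoc v3 (tD (p+2)) y3]
        _ = dem (dem v2 y3) v2⁻¹ := by rw [C1]
    -- phase 4 : regroup
    have D1 : dem y (tD (p+1)) = y * tD (p+1) :=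
      dem_right_asc dem hn2 hright hy (by omega) (by omega)
        (by rw [cq, e23, hyi2, hyi3]; omega)
    have D2 : dem (tD (p+1)) (y * tD (p+1)) = y2 := by
      have h1 : dem (tD (p+1)) (y * tD (p+1)) = tD (p+1) * (y * tD (p+1)) := by
        apply dem_left_asc dem hn2 hleft hytg (by omega) (by omega)
        have hinv : (y * tD (p+1))⁻¹ = tD (p+1) * y := by
          rw [mul_inv_rev, tD_invol, hyinv]
        rw [hinv, cq, e23, hqy1, hqy2]
        omega
      rw [h1, ← mul_assoc, ← hy2def]
    have D3 : dem y2 (tD p) = y2 * tD p :=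
      dem_right_asc dem hn2 hright hy2g hp0 (by omega)
        (by rw [hpi, hy2a, hy2b]; omega)
    have D4 : dem (tD p) (y2 * tD p) = y3 := by
      have h1 : dem (tD p) (y2 * tD p) = tD p * (y2 * tD p) := by
        apply dem_left_asc dem hn2 hleft hy2tg hp0 (by omega)
        have hinv : (y2 * tD p)⁻¹ = tD p * y2 := by
          rw [mul_inv_rev, tD_invol, hy2inv]
        rw [hinv, hpi, hpy1, hpy2v]
        omega
      rw [h1, ← mul_assoc, ← hy3def]
    have E3 : dem v3 (tD p) = u1 := by
      rw [dem_right_asc dem hn2 hright hv3g hp0 (by omega)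
        (by rw [hpi, hv3a, hv3b]; exact hba), ← hu1def]
    have E4 : dem u1 (tD (p+1)) = u2 := by
      rw [dem_right_asc dem hn2 hright hu1g (by omega) (by omega)
        (by rw [cq, e23, hu1b, hu1c]; exact hBC), ← hu2def]
    have F1 : dem (tD p) v3⁻¹ = u1⁻¹ := by
      have h1 : dem (tD p) v3⁻¹ = tD p * v3⁻¹ := by
        apply dem_left_asc dem hn2 hleft (Dgrp_inv hv3g) hp0 (by omega)
        rw [inv_inv, hpi, hv3a, hv3b]
        exact hba
      have h2 : tD p * v3⁻¹ = u1⁻¹ := by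
        conv_rhs => rw [hu1def, mul_inv_rev, tD_invol]
      rw [h1, h2]
    have F2 : dem (tD (p+1)) u1⁻¹ = u2⁻¹ := by
      have h1 : dem (tD (p+1)) u1⁻¹ = tD (p+1) * u1⁻¹ := by
        apply dem_left_asc dem hn2 hleft (Dgrp_inv hu1g) (by omega) (by omega)
        rw [inv_inv, cq, e23, hu1b, hu1c]
        exact hBC
      have h2 : tD (p+1) * u1⁻¹ = u2⁻¹ := by
        conv_rhs => rw [hu2def, mul_inv_rev, tD_invol]
      rw [h1, h2]
    have G1 : dem v3 y3 = dem u2 (dem (dem y (tD (p+1))) (tD p)) := by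
      calc dem v3 y3
          = dem v3 (dem (tD p) (y2 * tD p)) := by rw [D4]
        _ = dem v3 (dem (tD p) (dem y2 (tD p))) := by rw [D3]
        _ = dem (dem v3 (tD p)) (dem y2 (tD p)) := (hassoc v3 (tD p) (dem y2 (tD p))).symm
        _ = dem u1 (dem y2 (tD p)) := by rw [E3]
        _ = dem u1 (dem (dem (tD (p+1)) (y * tD (p+1))) (tD p)) := by rw [D2]
        _ = dem u1 (dem (tD (p+1)) (dem (y * tD (p+1)) (tD p))) := by
            rw [hassoc (tD (p+1)) (y * tD (p+1)) (tD p)]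
        _ = dem (dem u1 (tD (p+1))) (dem (y * tD (p+1)) (tD p)) :=
            (hassoc u1 (tD (p+1)) (dem (y * tD (p+1)) (tD p))).symm
        _ = dem u2 (dem (y * tD (p+1)) (tD p)) := by rw [E4]
        _ = dem u2 (dem (dem y (tD (p+1))) (tD p)) := by rw [D1]
    have z4 : dem (dem u2 y) u2⁻¹ = z := by
      rw [← z3]
      calc dem (dem u2 y) u2⁻¹
          = dem (dem u2 y) (dem (tD (p+1)) u1⁻¹) := by rw [F2]
        _ = dem u2 (dem y (dem (tD (p+1)) u1⁻¹)) := by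
            rw [hassoc u2 y (dem (tD (p+1)) u1⁻¹)]
        _ = dem u2 (dem (dem y (tD (p+1))) u1⁻¹) := by
            rw [hassoc y (tD (p+1)) u1⁻¹]
        _ = dem u2 (dem (dem y (tD (p+1))) (dem (tD p) v3⁻¹)) := by rw [F1]
        _ = dem u2 (dem (dem (dem y (tD (p+1))) (tD p)) v3⁻¹) := by
            rw [hassoc (dem y (tD (p+1))) (tD p) v3⁻¹]
        _ = dem (dem u2 (dem (dem y (tD (p+1))) (tD p))) v3⁻¹ := by
            rw [hassoc u2 (dem (dem y (tD (p+1))) (tD p)) v3⁻¹]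
        _ = dem (dem v3 y3) v3⁻¹ := by rw [G1]
    have hfin := hmin u2 hu2g z4
    omega
  exact ⟨w i, w (i+2), w (i+3), w (i+1), hAB, hBC, hdesc, rfl, rfl, rfl, rfl⟩

end helpers

end S19

/-- Let `n` be even, `z ∈ W⁺_n` a fixed-point-free involution, and
`w` a minimal-length element of `W⁺_n` with `w ∘ y ∘ w⁻¹ = z` for
`y = t₁t₃⋯t_{n−1}` (Demazure product).  If `i ∈ [n−3]` is odd and
`w_{i+1} > w_{i+3}`, then `w_i w_{i+1} w_{i+2} w_{i+3} = A, D, B, C` for some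
integers `A < B < C < D`. -/
theorem stmt19 (n : ℕ) (hn : Even n)
    (dem : Equiv.Perm ℤ → Equiv.Perm ℤ → Equiv.Perm ℤ)
    (hassoc : ∀ u v w, dem (dem u v) w = dem u (dem v w))
    (hone : ∀ w, dem w 1 = w ∧ dem 1 w = w)
    (hright : ∀ w ∈ Dgrp n, ∀ i : ℕ, i < n →
      dem w (tD i) = if lenD n (w * tD i) = lenD n w + 1 then w * tD i else w)
    (hleft : ∀ w ∈ Dgrp n, ∀ i : ℕ, i < n →
      dem (tD i) w = if lenD n (tD i * w) = lenD n w + 1 then tD i * w else w)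
    (z : Equiv.Perm ℤ) (hz : z ∈ Dgrp n) (hzi : z⁻¹ = z)
    (hfpf : ∀ i : ℤ, 1 ≤ i → i ≤ (n : ℤ) → z i ≠ i)
    (w : Equiv.Perm ℤ) (hw : w ∈ Dgrp n)
    (hwz : dem (dem w (yfpf n)) w⁻¹ = z)
    (hmin : ∀ v ∈ Dgrp n, dem (dem v (yfpf n)) v⁻¹ = z → lenD n w ≤ lenD n v)
    (i : ℤ) (hi1 : 1 ≤ i) (hin : i ≤ (n : ℤ) - 3) (hodd : Odd i)
    (hdesc : w (i + 3) < w (i + 1)) :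
    ∃ A B C D : ℤ, A < B ∧ B < C ∧ C < D ∧
      w i = A ∧ w (i + 1) = D ∧ w (i + 2) = B ∧ w (i + 3) = C :=
  S19.stmt19_aux n hn dem hassoc hone hright hleft z hz hzi hfpf w hw hwz hmin i hi1 hin hodd hdesc
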